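/- arXiv:2007.01673 — 4 statements merged into one kernel-verified Lean document; each statement's English description precedes it below -/
import Mathlib

section
/- Let ε > 0 and k ≥ 1. Every graph H on more than k·(2k)^{1/ε} vertices such that every subgraph of H on n' vertices has at most (n')^{2-ε} edges (i.e., H belongs to a hereditary ε-sparse class) contains an independent set of size at least k. -/
lemma key_exp (u : ℝ) (hu : 0 < u) :
    1 ≤ Real.exp (2 * (Real.log 2)^2 / u) * (1 - Real.exp (-u)) := by
  set c : ℝ := 2 * (Real.log 2)^2 with hcdef
  have l2 : (0.6931:ℝ) < Real.log 2 := by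
    have := Real.log_two_gt_d9; linarith
  have hc : (0.96:ℝ) < c := by rw [hcdef]; nlinarith
  have hq : 1 + c/u + (c/u)^2/2 ≤ Real.exp (c/u) :=
    Real.quadratic_le_exp_of_nonneg (by positivity)
  have h1 : u + 1 ≤ Real.exp u := Real.add_one_le_exp u
  have he : Real.exp 1 * u ≤ Real.exp u := by
    have h2 := Real.add_one_le_exp (u - 1)
    have h3 : Real.exp (u - 1) = Real.exp u / Real.exp 1 := by rw [Real.exp_sub]
    rw [h3] at h2
    have hepos : (0:ℝ) < Real.exp 1 := Real.exp_pos 1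
    have := mul_le_mul_of_nonneg_left h2 hepos.le
    calc Real.exp 1 * u ≤ Real.exp 1 * (u - 1 + 1) := le_of_eq (by ring)
      _ ≤ Real.exp 1 * (Real.exp u / Real.exp 1) := by
          apply mul_le_mul_of_nonneg_left h2 hepos.le
      _ = Real.exp u := by field_simp
  have he1 : (2.71:ℝ) < Real.exp 1 := by
    have := Real.exp_one_gt_d9; linarith
  -- key: t * (exp u - 1) ≥ 1
  have ht : 1 ≤ (c/u + (c/u)^2/2) * (Real.exp u - 1) := by
    rcases le_or_gt u 1 with h | h
    · have h3 : u ≤ Real.exp u - 1 := by linarith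
      have hfac : 0 ≤ c/u + (c/u)^2/2 := by positivity
      have step : (c/u + (c/u)^2/2) * u ≤ (c/u + (c/u)^2/2) * (Real.exp u - 1) :=
        mul_le_mul_of_nonneg_left h3 hfac
      have expand : (c/u + (c/u)^2/2) * u = c + c^2/(2*u) := by
        field_simp
      have hcu : c^2/2 ≤ c^2/(2*u) := by
        apply div_le_div_of_nonneg_left (by positivity) (by positivity)
        linarith
      nlinarith
    · have h3 : (Real.exp 1 - 1) * u ≤ Real.exp u - 1 := by nlinarith
      have hfac : (0:ℝ) ≤ c/u := by positivity
      have step : (c/u) * ((Real.exp 1 - 1) * u) ≤ (c/u + (c/u)^2/2) * (Real.exp u - 1) := by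
        have : (c/u) * ((Real.exp 1 - 1) * u) ≤ (c/u) * (Real.exp u - 1) :=
          mul_le_mul_of_nonneg_left h3 hfac
        nlinarith [sq_nonneg (c/u), h3]
      have expand : (c/u) * ((Real.exp 1 - 1) * u) = c * (Real.exp 1 - 1) := by
        field_simp
      nlinarith
  -- now combine
  have ha0 : 0 < Real.exp (-u) := Real.exp_pos _
  have ha1 : Real.exp (-u) < 1 := Real.exp_lt_one_iff.mpr (by linarith)
  have haE : Real.exp (-u) * Real.exp u = 1 := by
    rw [← Real.exp_add]; simp
  have hq0 : (0:ℝ) ≤ 1 + c/u + (c/u)^2/2 := by positivity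
  nlinarith [mul_le_mul_of_nonneg_right hq (le_of_lt (by linarith : (0:ℝ) < 1 - Real.exp (-u))),
    mul_le_mul_of_nonneg_left ht ha0.le]


lemma key_rpow {ε M : ℝ} (hε : 0 < ε) (hM : (4:ℝ)^(1/ε) ≤ M) :
    1 ≤ M * (1 - (2:ℝ)^(-ε)) := by
  have hl2 : 0 < Real.log 2 := Real.log_pos (by norm_num)
  set u : ℝ := ε * Real.log 2 with hu
  have hu0 : 0 < u := by positivity
  have h2e : (2:ℝ)^(-ε) = Real.exp (-u) := by
    rw [Real.rpow_def_of_pos (by norm_num : (0:ℝ) < 2)]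
    ring_nf
    rw [hu]; ring_nf
  have h4e : (4:ℝ)^(1/ε) = Real.exp (2 * (Real.log 2)^2 / u) := by
    rw [Real.rpow_def_of_pos (by norm_num : (0:ℝ) < 4)]
    have hlog4 : Real.log 4 = 2 * Real.log 2 := by
      rw [show (4:ℝ) = 2^(2:ℕ) by norm_num, Real.log_pow]; push_cast; ring
    rw [hlog4, hu]
    congr 1
    field_simp
  have hk := key_exp u hu0
  rw [← h4e, ← h2e] at hk
  have hpos : 0 < 1 - (2:ℝ)^(-ε) := by
    nlinarith [Real.rpow_pos_of_pos (by norm_num : (0:ℝ) < 4) (1/ε), hk]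
  calc (1:ℝ) ≤ (4:ℝ)^(1/ε) * (1 - (2:ℝ)^(-ε)) := hk
    _ ≤ M * (1 - (2:ℝ)^(-ε)) := mul_le_mul_of_nonneg_right hM hpos.le

lemma lemD {ε m k : ℝ} (hε : 0 < ε) (hm : 2 ≤ m) (hmk : m ≤ k) :
    m^(1-ε)/k ≤ (2:ℝ)^(-ε) := by
  have hk2 : (2:ℝ) ≤ k := le_trans hm hmk
  have hk0 : (0:ℝ) < k := by linarith
  rcases le_or_gt ε 1 with h | h
  · have h1 : m^(1-ε) ≤ k^(1-ε) := Real.rpow_le_rpow (by linarith) hmk (by linarith)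
    have h2 : k^(1-ε) = k * k^(-ε) := by
      rw [show (1-ε) = 1 + (-ε) by ring, Real.rpow_add hk0, Real.rpow_one]
    have h3 : k^(-ε) ≤ (2:ℝ)^(-ε) :=
      Real.rpow_le_rpow_of_nonpos (by norm_num) hk2 (by linarith)
    calc m^(1-ε)/k ≤ k^(1-ε)/k := by
          exact div_le_div_of_nonneg_right h1 hk0.le
      _ = k^(-ε) := by rw [h2]; field_simp
      _ ≤ (2:ℝ)^(-ε) := h3
  · have h1 : m^(1-ε) ≤ (2:ℝ)^(1-ε) :=
      Real.rpow_le_rpow_of_nonpos (by norm_num) hm (by linarith)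
    have h2 : (2:ℝ)^(1-ε) = 2 * (2:ℝ)^(-ε) := by
      rw [show (1-ε) = 1 + (-ε) by ring, Real.rpow_add (by norm_num : (0:ℝ) < 2), Real.rpow_one]
    have hm0 : (0:ℝ) ≤ m^(1-ε) := (Real.rpow_pos_of_pos (by linarith) _).le
    calc m^(1-ε)/k ≤ (2:ℝ)^(1-ε)/k := by
          exact div_le_div_of_nonneg_right h1 hk0.le
      _ ≤ (2:ℝ)^(1-ε)/2 := by
          apply div_le_div_of_nonneg_left (by positivity) (by norm_num) hk2
      _ = (2:ℝ)^(-ε) := by rw [h2]; field_simp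


lemma exists_low_degree {V : Type*} [Fintype V] [DecidableEq V] (H : SimpleGraph V)
    [DecidableRel H.Adj] (s : Finset V) (hs : s.Nonempty) :
    ∃ v ∈ s, s.card * (s.filter (H.Adj v)).card
      ≤ 2 * (H.edgeFinset.filter fun e => ∀ w ∈ e, w ∈ s).card := by
  obtain ⟨v, hv, hmin⟩ := Finset.exists_min_image s (fun v => (s.filter (H.Adj v)).card) hs
  refine ⟨v, hv, ?_⟩
  have hsum : s.card * (s.filter (H.Adj v)).card ≤ ∑ w ∈ s, (s.filter (H.Adj w)).card := by
    calc s.card * (s.filter (H.Adj v)).card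
        = ∑ _w ∈ s, (s.filter (H.Adj v)).card := by rw [Finset.sum_const, smul_eq_mul]
      _ ≤ ∑ w ∈ s, (s.filter (H.Adj w)).card := Finset.sum_le_sum fun w hw => hmin w hw
  have hsig : ∑ w ∈ s, (s.filter (H.Adj w)).card
      = (s.sigma fun w => s.filter (H.Adj w)).card := (Finset.card_sigma _ _).symm
  have hcount : (s.sigma fun w => s.filter (H.Adj w)).card
      ≤ 2 * (H.edgeFinset.filter fun e => ∀ w ∈ e, w ∈ s).card := by
    apply Finset.card_le_mul_card_image_of_maps_to
      (f := fun p : (_ : V) × V => s(p.1, p.2))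
    · rintro ⟨a, b⟩ hab
      rw [Finset.mem_sigma] at hab
      obtain ⟨ha, hb⟩ := hab
      rw [Finset.mem_filter] at hb ⊢
      refine ⟨SimpleGraph.mem_edgeFinset.mpr hb.2, ?_⟩
      intro w hw
      rw [Sym2.mem_iff] at hw
      rcases hw with rfl | rfl
      · exact ha
      · exact hb.1
    · intro e he
      induction e using Sym2.ind with
      | _ a b =>
        have hsub : ((s.sigma fun w => s.filter (H.Adj w)).filter
            fun p : (_ : V) × V => s(p.1, p.2) = s(a, b))
            ⊆ {⟨a, b⟩, ⟨b, a⟩} := by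
          rintro ⟨x, y⟩ hxy
          rw [Finset.mem_filter] at hxy
          have := hxy.2
          rw [Sym2.eq_iff] at this
          rcases this with ⟨rfl, rfl⟩ | ⟨rfl, rfl⟩
          · exact Finset.mem_insert_self _ _
          · exact Finset.mem_insert_of_mem (Finset.mem_singleton_self _)
        calc _ ≤ ({⟨a, b⟩, ⟨b, a⟩} : Finset ((_ : V) × V)).card := Finset.card_le_card hsub
          _ ≤ 2 := by
            apply le_trans (Finset.card_insert_le _ _)
            simp
  omega


set_option maxHeartbeats 1000000 in
lemma indep_aux {V : Type*} [Fintype V] [DecidableEq V] (H : SimpleGraph V)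
    [DecidableRel H.Adj] (ε : ℝ) (hε : 0 < ε) (k : ℕ)
    (hsparse : ∀ s : Finset V,
      (((H.edgeFinset.filter fun e => ∀ v ∈ e, v ∈ s)).card : ℝ) ≤ (s.card : ℝ) ^ (2 - ε)) :
    ∀ j : ℕ, j ≤ k → ∀ s : Finset V,
      (j : ℝ) * ((2 * k : ℕ) : ℝ) ^ (1 / ε) < (s.card : ℝ) →
      ∃ I : Finset V, I ⊆ s ∧ j ≤ I.card ∧
        (↑I : Set V).Pairwise fun u v => ¬ H.Adj u v := by
  intro j
  induction j with
  | zero =>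
    intro _ s _
    exact ⟨∅, by simp, by simp, by simp⟩
  | succ j ih =>
    intro hjk s hcard
    have hk1 : 1 ≤ k := le_trans (Nat.succ_le_succ (Nat.zero_le j)) hjk
    have h2k : (0:ℝ) < ((2 * k : ℕ) : ℝ) := by
      have h : 1 ≤ 2 * k := by omega
      exact_mod_cast Nat.lt_of_lt_of_le Nat.zero_lt_one h
    have hM0 : (0:ℝ) < ((2 * k : ℕ) : ℝ) ^ (1 / ε) := Real.rpow_pos_of_pos h2k _
    have hs0 : (0:ℝ) < (s.card : ℝ) := by
      refine lt_of_le_of_lt ?_ hcard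
      positivity
    have hsne : s.Nonempty := by
      rw [← Finset.card_pos]
      exact_mod_cast hs0
    obtain ⟨v, hv, hdeg⟩ := exists_low_degree H s hsne
    by_cases hj0 : j = 0
    · subst hj0
      refine ⟨{v}, Finset.singleton_subset_iff.mpr hv, by simp, by simp⟩
    have hj1 : 1 ≤ j := Nat.one_le_iff_ne_zero.mpr hj0
    have hk2 : (2:ℝ) ≤ (k:ℝ) := by exact_mod_cast le_trans (by omega : 2 ≤ j + 1) hjk
    set N := s.filter (H.Adj v) with hNdef
    set s' := (s.erase v) \ N with hs'def
    -- nat facts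
    have hcards_nat : s.card ≤ s'.card + 1 + N.card := by
      have h1 : (s.erase v).card + 1 = s.card := by
        rw [Finset.card_erase_of_mem hv]
        exact Nat.succ_pred_eq_of_pos (Finset.card_pos.mpr hsne)
      have h2 : (s.erase v).card ≤ s'.card + N.card :=
        Finset.card_le_card_sdiff_add_card
      omega
    -- cast everything to ℝ
    have hdegR : (s.card : ℝ) * (N.card : ℝ)
        ≤ 2 * (((H.edgeFinset.filter fun e => ∀ w ∈ e, w ∈ s)).card : ℝ) := by
      exact_mod_cast hdeg
    have hedge : (((H.edgeFinset.filter fun e => ∀ w ∈ e, w ∈ s)).card : ℝ)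
        ≤ (s.card : ℝ) ^ (2 - ε) := hsparse s
    have hcardsR : (s.card : ℝ) ≤ (s'.card : ℝ) + 1 + (N.card : ℝ) := by
      exact_mod_cast hcards_nat
    have hcardR : ((j:ℝ) + 1) * ((2 * k : ℕ) : ℝ) ^ (1 / ε) < (s.card : ℝ) := by
      push_cast at hcard ⊢
      linarith
    -- abbreviations
    set M : ℝ := ((2 * k : ℕ) : ℝ) ^ (1 / ε) with hMdef
    set n : ℝ := (s.card : ℝ) with hndef
    set d : ℝ := (N.card : ℝ) with hddef
    set m : ℝ := (s'.card : ℝ) with hmdef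
    have hMe : M ^ ε = ((2 * k : ℕ) : ℝ) := by
      rw [hMdef, ← Real.rpow_mul h2k.le, one_div, inv_mul_cancel₀ hε.ne', Real.rpow_one]
    clear_value M n d m
    have hd0 : (0:ℝ) ≤ d := hddef ▸ Nat.cast_nonneg _
    have hm0 : (0:ℝ) ≤ m := hmdef ▸ Nat.cast_nonneg _
    have hnd : n * d ≤ 2 * n ^ (2 - ε) := by linarith
    have hsplit : n ^ (2 - ε) = n * n ^ (1 - ε) := by
      rw [show (2 - ε) = 1 + (1 - ε) by ring, Real.rpow_add hs0, Real.rpow_one]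
    have hd1 : d ≤ 2 * n ^ (1 - ε) := by
      rw [hsplit] at hnd
      have := le_of_mul_le_mul_left (by linarith : n * d ≤ n * (2 * n ^ (1 - ε))) hs0
      linarith
    set P : ℝ := ((j:ℝ) + 1) ^ ε with hPdef
    have hjp0 : (0:ℝ) < (j:ℝ) + 1 := by positivity
    have hP0 : 0 < P := Real.rpow_pos_of_pos hjp0 _
    have hP1 : 1 ≤ P :=
      Real.one_le_rpow (by linarith [Nat.cast_nonneg (α := ℝ) j]) hε.le
    clear_value P
    have hne : P * ((2 * k : ℕ) : ℝ) ≤ n ^ ε := by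
      have h1 : (((j:ℝ) + 1) * M) ^ ε ≤ n ^ ε :=
        Real.rpow_le_rpow (by positivity) hcardR.le hε.le
      rw [Real.mul_rpow hjp0.le hM0.le, hMe, ← hPdef] at h1
      exact h1
    have hmerge : n ^ (1 - ε) * n ^ ε = n := by
      rw [← Real.rpow_add hs0]; norm_num
    have hdP2k : d * (P * ((2 * k : ℕ) : ℝ)) ≤ 2 * n := by
      calc d * (P * ((2 * k : ℕ) : ℝ)) ≤ d * n ^ ε := mul_le_mul_of_nonneg_left hne hd0
        _ ≤ (2 * n ^ (1 - ε)) * n ^ ε :=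
            mul_le_mul_of_nonneg_right hd1 (Real.rpow_pos_of_pos hs0 _).le
        _ = 2 * n := by rw [mul_assoc, hmerge]
    have hdPk : d * (P * (k:ℝ)) ≤ n := by
      have h4 : d * (P * ((2 * k : ℕ) : ℝ)) = 2 * (d * (P * (k:ℝ))) := by push_cast; ring
      linarith [h4 ▸ hdP2k]
    set Q : ℝ := P * (k:ℝ) with hQdef
    have hQ0 : (0:ℝ) < Q := by rw [hQdef]; positivity
    have hQ2 : 2 ≤ Q := by
      rw [hQdef]
      calc (2:ℝ) ≤ (k:ℝ) := hk2
        _ = 1 * (k:ℝ) := (one_mul _).symm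
        _ ≤ P * (k:ℝ) := mul_le_mul_of_nonneg_right hP1 (by linarith)
    have hMlb : (4:ℝ)^(1/ε) ≤ M := by
      rw [hMdef]
      apply Real.rpow_le_rpow (by norm_num) _ (by positivity)
      push_cast; linarith
    have hD : ((j:ℝ) + 1) ^ (1 - ε) / (k:ℝ) ≤ (2:ℝ)^(-ε) :=
      lemD hε (by exact_mod_cast (by omega : 2 ≤ j + 1)) (by exact_mod_cast hjk)
    have hkey : 1 ≤ M * (1 - ((j:ℝ) + 1) ^ (1 - ε) / (k:ℝ)) := by
      have h1 := key_rpow hε hMlb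
      nlinarith
    have hPsplit : ((j:ℝ) + 1) ^ (1 - ε) = ((j:ℝ) + 1) / P := by
      rw [show (1 - ε) = 1 + (-ε) by ring, Real.rpow_add hjp0, Real.rpow_one,
        Real.rpow_neg hjp0.le, hPdef]
      ring
    have hK2 : Q ≤ M * (Q - ((j:ℝ) + 1)) := by
      rw [hPsplit] at hkey
      have heq : M * (1 - ((j:ℝ) + 1) / P / (k:ℝ)) * Q = M * (Q - ((j:ℝ) + 1)) := by
        rw [hQdef]; field_simp
      have h := mul_le_mul_of_nonneg_right hkey hQ0.le
      rw [one_mul, heq] at h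
      exact h
    clear_value Q
    have harith : (j:ℝ) * M < m := by
      have h3 : (n - 1 - d) * Q ≤ m * Q := by
        apply mul_le_mul_of_nonneg_right _ hQ0.le
        linarith
      have h5 : ((j:ℝ) + 1) * M * (Q - 1) < n * (Q - 1) :=
        mul_lt_mul_of_pos_right hcardR (by linarith)
      have h6 : (j:ℝ) * M * Q < m * Q := by nlinarith
      exact lt_of_mul_lt_mul_right h6 hQ0.le
    -- apply IH
    obtain ⟨I', hI'sub, hI'card, hI'pw⟩ := ih (by omega) s' (hmdef ▸ harith)
    have hs'sub : s' ⊆ s := le_trans (Finset.sdiff_subset) (Finset.erase_subset _ _)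
    have hvnot : v ∉ s' := fun h =>
      (Finset.notMem_erase v s) (Finset.mem_sdiff.mp h).1
    have hvI' : v ∉ I' := fun h => hvnot (hI'sub h)
    refine ⟨insert v I', ?_, ?_, ?_⟩
    · rw [Finset.insert_subset_iff]
      exact ⟨hv, le_trans hI'sub hs'sub⟩
    · rw [Finset.card_insert_of_notMem hvI']
      omega
    · rw [Finset.coe_insert]
      have hsym : Symmetric (fun u w : V => ¬ H.Adj u w) := fun a b h hadj => h (H.adj_symm hadj)
      haveI : Std.Symm (fun u w : V => ¬ H.Adj u w) := ⟨fun a b h => hsym h⟩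
      rw [Set.pairwise_insert_of_symm]
      refine ⟨hI'pw, ?_⟩
      intro b hb _
      intro hadj
      have hbs' : b ∈ s' := hI'sub hb
      have hbN : b ∉ N := (Finset.mem_sdiff.mp hbs').2
      exact hbN (Finset.mem_filter.mpr ⟨hs'sub hbs', hadj⟩)


/-- Every hereditarily ε-sparse graph on more than `k·(2k)^(1/ε)` vertices contains
an independent set of size at least `k`. -/
theorem stmt1 {V : Type*} [Fintype V] [DecidableEq V] (H : SimpleGraph V)
    [DecidableRel H.Adj] (ε : ℝ) (hε : 0 < ε) (k : ℕ) (hk : 1 ≤ k)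
    (hsparse : ∀ s : Finset V,
      (((H.edgeFinset.filter fun e => ∀ v ∈ e, v ∈ s)).card : ℝ) ≤ (s.card : ℝ) ^ (2 - ε))
    (hn : (k : ℝ) * ((2 * k : ℕ) : ℝ) ^ (1 / ε) < (Fintype.card V : ℝ)) :
    ∃ I : Finset V, k ≤ I.card ∧ (↑I : Set V).Pairwise fun u v => ¬ H.Adj u v := by
  have huniv : (k : ℝ) * ((2 * k : ℕ) : ℝ) ^ (1 / ε) < ((Finset.univ : Finset V).card : ℝ) := by
    rw [Finset.card_univ]; exact hn
  obtain ⟨I, _, hIcard, hIpw⟩ := indep_aux H ε hε k hsparse k le_rfl Finset.univ huniv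
  exact ⟨I, hIcard, hIpw⟩
end

section
/- Let G be a {C3,C4}-free graph, let S and T be independent sets of size k, and suppose some vertex w ∈ S ∪ T has degree at least 3k in the subgraph induced by N[S ∪ T]. Then at least k neighbors of w have no neighbor in (S ∪ T) \ {w}. -/
/-- If `S`, `T` are independent sets of size `k`, the subgraph induced by the closed
neighborhood of `S ∪ T` is {C₃,C₄}-free, and some `w ∈ S ∪ T` has degree at least `3k`,
then at least `k` neighbors of `w` have no neighbor in `(S ∪ T) \ {w}`. -/
theorem stmt4 {V : Type*} [Fintype V] [DecidableEq V] (G : SimpleGraph V)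
    [DecidableRel G.Adj] (k : ℕ) (S T : Finset V)
    (hSi : (↑S : Set V).Pairwise fun a b => ¬ G.Adj a b)
    (hTi : (↑T : Set V).Pairwise fun a b => ¬ G.Adj a b)
    (hScard : S.card = k) (hTcard : T.card = k)
    -- the closed neighborhood of `S ∪ T`
    (M : Set V)
    (hM : M = {x : V | x ∈ S ∪ T ∨ ∃ y ∈ S ∪ T, G.Adj y x})
    -- the graph induced by `M` contains no triangle
    (h3 : ∀ a b c : V, a ∈ M → b ∈ M → c ∈ M →
      G.Adj a b → G.Adj b c → ¬ G.Adj a c)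
    -- the graph induced by `M` contains no (induced) `C₄`
    (h4 : ∀ a b c d : V, a ∈ M → b ∈ M → c ∈ M → d ∈ M → a ≠ c → b ≠ d →
      G.Adj a b → G.Adj b c → G.Adj c d → ¬ G.Adj d a)
    (w : V) (hw : w ∈ S ∪ T) (hdeg : 3 * k ≤ G.degree w) :
    k ≤ ((G.neighborFinset w).filter
      fun x => ∀ y ∈ S ∪ T, y ≠ w → ¬ G.Adj x y).card := by
  classical
  set P : V → Prop := fun x => ∀ y ∈ S ∪ T, y ≠ w → ¬ G.Adj x y with hP
  show k ≤ ((G.neighborFinset w).filter fun x => P x).card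
  have hMem : ∀ x, x ∈ G.neighborFinset w → x ∈ M := by
    intro x hx
    rw [hM]
    exact Or.inr ⟨w, hw, (G.mem_neighborFinset w x).mp hx⟩
  have hwM : w ∈ M := by rw [hM]; exact Or.inl hw
  have hSTM : ∀ y, y ∈ S ∪ T → y ∈ M := by
    intro y hy; rw [hM]; exact Or.inl hy
  -- the bad set
  have hbad : ((G.neighborFinset w).filter fun x => ¬ P x).card ≤ (S ∪ T).card := by
    have hex : ∀ x ∈ (G.neighborFinset w).filter fun x => ¬ P x,
        ∃ y, y ∈ S ∪ T ∧ y ≠ w ∧ G.Adj x y := by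
      intro x hx
      have h := (Finset.mem_filter.mp hx).2
      have : ¬ ∀ y ∈ S ∪ T, y ≠ w → ¬ G.Adj x y := h
      push_neg at this
      obtain ⟨y, hy1, hy2, hy3⟩ := this
      exact ⟨y, hy1, hy2, hy3⟩
    set f : V → V := fun x =>
      if h : ∃ y, y ∈ S ∪ T ∧ y ≠ w ∧ G.Adj x y then h.choose else w with hf
    apply Finset.card_le_card_of_injOn f
    · intro x hx
      have h := hex x hx
      simp only [hf, dif_pos h]
      exact h.choose_spec.1
    · intro x1 hx1 x2 hx2 heq
      by_contra hne
      have h1 := hex x1 hx1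
      have h2 := hex x2 hx2
      simp only [hf, dif_pos h1, dif_pos h2] at heq
      obtain ⟨hy1ST, hy1w, hadj1⟩ := h1.choose_spec
      obtain ⟨hy2ST, hy2w, hadj2⟩ := h2.choose_spec
      set y := h1.choose
      rw [← heq] at hadj2
      have hx1n := (Finset.mem_filter.mp hx1).1
      have hx2n := (Finset.mem_filter.mp hx2).1
      exact h4 w x1 y x2 hwM (hMem x1 hx1n) (hSTM y hy1ST) (hMem x2 hx2n)
        (Ne.symm hy1w) hne ((G.mem_neighborFinset w x1).mp hx1n) hadj1
        hadj2.symm ((G.mem_neighborFinset w x2).mp hx2n).symm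
  have hsplit : ((G.neighborFinset w).filter fun x => P x).card
      + ((G.neighborFinset w).filter fun x => ¬ P x).card = G.degree w := by
    rw [SimpleGraph.degree]
    exact Finset.card_filter_add_card_filter_not _
  have hUT : (S ∪ T).card ≤ 2 * k := by
    calc (S ∪ T).card ≤ S.card + T.card := Finset.card_union_le _ _
    _ = 2 * k := by rw [hScard, hTcard]; ring
  omega
end

section
/- Let G be a connected graph and let S and T be two independent sets of the same size k such that S ∪ T is a 2-independent set (all pairwise distances between distinct vertices of S ∪ T are at least 3). If S ∩ T = ∅ and (u,v) is a pair minimizing distance over u ∈ S, v ∈ T, then every internal vertex of a shortest uv-path, as well as v itself, has no neighbor in S \ {u} and is not in S \ {u}; hence sliding the token from u along the shortest path to v keeps the set independent at every step. -/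
/-- Let `S`, `T` be disjoint independent sets of size `k` in a connected graph `G` whose
union is 2-independent. If `(u, v)` minimizes distance over `S × T`, then every vertex
`w ≠ u` on a shortest `uv`-path satisfies `N[w] ∩ (S \ {u}) = ∅`. -/
theorem stmt12 {V : Type*} [DecidableEq V] (G : SimpleGraph V) (hconn : G.Connected)
    (k : ℕ) (S T : Finset V) (hdisj : Disjoint S T)
    (hScard : S.card = k) (hTcard : T.card = k)
    (hSi : (↑S : Set V).Pairwise fun a b => ¬ G.Adj a b)
    (hTi : (↑T : Set V).Pairwise fun a b => ¬ G.Adj a b)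
    (h2 : ∀ a ∈ S ∪ T, ∀ b ∈ S ∪ T, a ≠ b → 3 ≤ G.edist a b)
    (u v : V) (hu : u ∈ S) (hv : v ∈ T)
    (hmin : ∀ s ∈ S, ∀ t ∈ T, G.dist u v ≤ G.dist s t)
    (p : G.Walk u v) (hp : p.length = G.dist u v) :
    ∀ w ∈ p.support, w ≠ u → ∀ s ∈ S, s ≠ u → w ≠ s ∧ ¬ G.Adj w s := by
  intro w hw hwu s hs hsu
  -- split the walk at w
  have hsplit : (p.takeUntil w hw).length + (p.dropUntil w hw).length = p.length := by
    have := congrArg SimpleGraph.Walk.length (p.take_spec hw)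
    rwa [SimpleGraph.Walk.length_append] at this
  have h1 : G.dist u w ≤ (p.takeUntil w hw).length := SimpleGraph.dist_le _
  have h2' : G.dist w v ≤ (p.dropUntil w hw).length := SimpleGraph.dist_le _
  have hsum : G.dist u w + G.dist w v ≤ G.dist u v := by omega
  have huw : 1 ≤ G.dist u w := hconn.pos_dist_of_ne (Ne.symm hwu)
  constructor
  · rintro rfl
    have := hmin w hs v hv
    omega
  · intro hadj
    have hws : G.dist w s ≤ 1 := by
      rw [SimpleGraph.dist_eq_one_iff_adj.mpr hadj]
    have hsv : G.dist u v ≤ G.dist s v := hmin s hs v hv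
    have htri : G.dist s v ≤ G.dist s w + G.dist w v := hconn.dist_triangle
    rw [show G.dist s w = G.dist w s from SimpleGraph.dist_comm] at htri
    have huw1 : G.dist u w = 1 := by omega
    have hadjuw : G.Adj u w := SimpleGraph.dist_eq_one_iff_adj.mp huw1
    -- walk u - w - s of length 2
    have hwalk : G.edist u s ≤ 2 := by
      have := SimpleGraph.edist_le
        (SimpleGraph.Walk.cons hadjuw (SimpleGraph.Walk.cons hadj SimpleGraph.Walk.nil))
      simpa using this
    have h3 : (3 : ℕ∞) ≤ G.edist u s :=
      h2 u (Finset.mem_union_left _ hu) s (Finset.mem_union_left _ hs) (Ne.symm hsu)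
    have : (3 : ℕ∞) ≤ 2 := le_trans h3 hwalk
    norm_num at this
end

section
/- Kim's bound application: every triangle-free graph on more than c·k²/log k vertices (for a suitable absolute constant c) contains an independent set of size at least k. Equivalently, the Ramsey-type statement: a triangle-free graph on n vertices has an independent set of size Ω(√(n log n)). -/
open Finset SimpleGraph

lemma classIneq (d L a : ℕ) (h : 2^L ≤ d) : L * (1 + 2^a) ≤ 8*d + 4*(a*2^a) := by
  rcases le_or_gt L (2*a) with hc | hc
  · have h1 : (1:ℕ) ≤ 2^a := Nat.one_le_two_pow
    calc L * (1 + 2^a) ≤ (2*a) * (1 + 2^a) := Nat.mul_le_mul_right _ hc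
      _ ≤ (2*a) * (2^a + 2^a) := by apply Nat.mul_le_mul_left; omega
      _ = 4*(a*2^a) := by ring
      _ ≤ 8*d + 4*(a*2^a) := Nat.le_add_left _ _
  · have ha : a ≤ L := by omega
    have h1 : L - a < 2^(L-a) := Nat.lt_two_pow_self
    have h2 : L ≤ 4 * 2^(L-a) := by omega
    have h3 : (1:ℕ) ≤ 2^a := Nat.one_le_two_pow
    calc L * (1 + 2^a) ≤ L * (2 * 2^a) := by apply Nat.mul_le_mul_left; omega
      _ ≤ (4 * 2^(L-a)) * (2 * 2^a) := Nat.mul_le_mul_right _ h2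
      _ = 8 * (2^(L-a) * 2^a) := by ring
      _ = 8 * 2^L := by rw [← pow_add]; congr 2; omega
      _ ≤ 8 * d := Nat.mul_le_mul_left _ h
      _ ≤ 8*d + 4*(a*2^a) := Nat.le_add_right _ _

lemma two_mul_sum_powerset_card {V : Type} [DecidableEq V] (A : Finset V) :
    2 * ∑ s ∈ A.powerset, s.card = A.card * 2 ^ A.card := by
  induction A using Finset.induction_on with
  | empty => simp
  | @insert x A hx ih =>
    rw [Finset.sum_powerset_insert hx]
    have himg : ∑ s ∈ A.powerset, (insert x s).card
        = (∑ s ∈ A.powerset, s.card) + 2 ^ A.card := by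
      rw [Finset.sum_congr rfl (fun s hs => Finset.card_insert_of_notMem
        (fun hxs => hx (Finset.mem_powerset.1 hs hxs))), Finset.sum_add_distrib,
        Finset.sum_const, Finset.card_powerset, smul_eq_mul, mul_one]
    rw [himg, Finset.card_insert_of_notMem hx]
    calc 2 * ((∑ s ∈ A.powerset, s.card) + ((∑ s ∈ A.powerset, s.card) + 2 ^ A.card))
        = 2 * (2 * ∑ s ∈ A.powerset, s.card) + 2 * 2 ^ A.card := by ring
      _ = 2 * (A.card * 2 ^ A.card) + 2 * 2 ^ A.card := by rw [ih]
      _ = (A.card + 1) * 2 ^ (A.card + 1) := by rw [pow_succ]; ring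

variable {V : Type} [Fintype V] [DecidableEq V] {G : SimpleGraph V} [DecidableRel G.Adj]

lemma fiber_eq (htf : G.CliqueFree 3) (v : V) (J : Finset V)
    (hJv : v ∉ J) (hJN : ∀ u ∈ J, ¬ G.Adj v u) (hJind : ∀ a ∈ J, ∀ b ∈ J, ¬ G.Adj a b) :
    ((univ.filter (fun I : Finset V => ∀ a ∈ I, ∀ b ∈ I, ¬ G.Adj a b)).filter
        (fun I => I \ insert v (G.neighborFinset v) = J))
      = insert (insert v J)
        (((G.neighborFinset v).filter (fun u => ∀ w ∈ J, ¬ G.Adj u w)).powerset.image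
          (fun s => J ∪ s)) := by
  ext I
  simp only [Finset.mem_filter, Finset.mem_univ, true_and, Finset.mem_insert,
    Finset.mem_image, Finset.mem_powerset]
  constructor
  · rintro ⟨hind, hdiff⟩
    by_cases hv : v ∈ I
    · left
      apply Finset.ext
      intro a
      simp only [Finset.mem_insert]
      constructor
      · intro ha
        by_cases hav : a = v
        · exact Or.inl hav
        · refine Or.inr ?_
          rw [← hdiff, Finset.mem_sdiff, Finset.mem_insert, mem_neighborFinset]
          exact ⟨ha, fun h => h.elim hav (fun h2 => hind v hv a ha h2)⟩
      · rintro (rfl | ha)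
        · exact hv
        · rw [← hdiff, Finset.mem_sdiff] at ha; exact ha.1
    · refine Or.inr ⟨I ∩ G.neighborFinset v, ?_, ?_⟩
      · intro u hu
        rw [Finset.mem_inter] at hu
        rw [Finset.mem_filter]
        refine ⟨hu.2, fun w hw => ?_⟩
        have hwI : w ∈ I := by rw [← hdiff, Finset.mem_sdiff] at hw; exact hw.1
        exact hind u hu.1 w hwI
      · apply Finset.ext
        intro a
        simp only [Finset.mem_union, Finset.mem_inter]
        constructor
        · rintro (ha | ⟨ha, _⟩)
          · rw [← hdiff, Finset.mem_sdiff] at ha; exact ha.1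
          · exact ha
        · intro ha
          by_cases haN : a ∈ G.neighborFinset v
          · exact Or.inr ⟨ha, haN⟩
          · refine Or.inl ?_
            rw [← hdiff, Finset.mem_sdiff, Finset.mem_insert]
            exact ⟨ha, fun h => h.elim (fun h2 => hv (h2 ▸ ha)) haN⟩
  · rintro (rfl | ⟨s, hs, rfl⟩)
    · refine ⟨?_, ?_⟩
      · intro a ha b hb
        simp only [Finset.mem_insert] at ha hb
        rcases ha with rfl | ha
        · rcases hb with rfl | hb
          · exact fun h => G.irrefl h
          · exact hJN b hb
        · rcases hb with rfl | hb
          · exact fun h => hJN a ha (G.adj_symm h)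
          · exact hJind a ha b hb
      · apply Finset.ext
        intro a
        simp only [Finset.mem_sdiff, Finset.mem_insert, mem_neighborFinset]
        constructor
        · rintro ⟨rfl | ha, hn⟩
          · exact absurd (Or.inl rfl) hn
          · exact ha
        · intro ha
          refine ⟨Or.inr ha, ?_⟩
          rintro (rfl | h)
          · exact hJv ha
          · exact hJN a ha h
    · have hsN : ∀ u ∈ s, G.Adj v u := fun u hu =>
        (mem_neighborFinset G v u).1 (Finset.mem_filter.1 (hs hu)).1
      have hsJ : ∀ u ∈ s, ∀ w ∈ J, ¬ G.Adj u w := fun u hu =>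
        (Finset.mem_filter.1 (hs hu)).2
      refine ⟨?_, ?_⟩
      · intro a ha b hb hadj
        simp only [Finset.mem_union] at ha hb
        rcases ha with ha | ha
        · rcases hb with hb | hb
          · exact hJind a ha b hb hadj
          · exact hsJ b hb a ha (G.adj_symm hadj)
        · rcases hb with hb | hb
          · exact hsJ a ha b hb hadj
          · exact htf {v, a, b} (is3Clique_triple_iff.2 ⟨hsN a ha, hsN b hb, hadj⟩)
      · apply Finset.ext
        intro a
        simp only [Finset.mem_sdiff, Finset.mem_union, Finset.mem_insert, mem_neighborFinset]
        constructor
        · rintro ⟨ha | ha, hn⟩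
          · exact ha
          · exact absurd (Or.inr (hsN a ha)) hn
        · intro ha
          refine ⟨Or.inl ha, ?_⟩
          rintro (rfl | h)
          · exact hJv ha
          · exact hJN a ha h

lemma step1' (htf : G.CliqueFree 3) (d : ℕ) (hd : d ≠ 0) (v : V) :
    Nat.log 2 d * (univ.filter (fun I : Finset V => ∀ a ∈ I, ∀ b ∈ I, ¬ G.Adj a b)).card
      ≤ 8 * ∑ I ∈ univ.filter (fun I : Finset V => ∀ a ∈ I, ∀ b ∈ I, ¬ G.Adj a b),
          (d * (if v ∈ I then 1 else 0) + (G.neighborFinset v ∩ I).card) := by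
  set S : Finset (Finset V) :=
    univ.filter (fun I : Finset V => ∀ a ∈ I, ∀ b ∈ I, ¬ G.Adj a b) with hSdef
  set π : Finset V → Finset V := fun I => I \ insert v (G.neighborFinset v) with hπ
  set f : Finset V → ℕ :=
    fun I => d * (if v ∈ I then 1 else 0) + (G.neighborFinset v ∩ I).card with hf
  have hmaps : ∀ I ∈ S, π I ∈ S.image π := fun I hI => Finset.mem_image_of_mem _ hI
  have hcard : S.card = ∑ J ∈ S.image π, (S.filter (fun I => π I = J)).card :=
    Finset.card_eq_sum_card_fiberwise hmaps
  have hsum : ∑ J ∈ S.image π, ∑ I ∈ S.filter (fun I => π I = J), f I = ∑ I ∈ S, f I :=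
    Finset.sum_fiberwise_of_maps_to hmaps f
  rw [hcard, ← hsum, Finset.mul_sum, Finset.mul_sum]
  apply Finset.sum_le_sum
  intro J hJ
  obtain ⟨I₀, hI₀S, hI₀⟩ := Finset.mem_image.1 hJ
  have hI₀ind : ∀ a ∈ I₀, ∀ b ∈ I₀, ¬ G.Adj a b := (Finset.mem_filter.1 hI₀S).2
  have hJsub : J ⊆ I₀ := by rw [← hI₀]; exact Finset.sdiff_subset
  have hJv : v ∉ J := by
    rw [← hI₀, Finset.mem_sdiff, Finset.mem_insert]
    intro h
    exact h.2 (Or.inl rfl)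
  have hJN : ∀ u ∈ J, ¬ G.Adj v u := by
    intro u hu
    rw [← hI₀, Finset.mem_sdiff, Finset.mem_insert] at hu
    intro hadj
    exact hu.2 (Or.inr ((mem_neighborFinset G v u).2 hadj))
  have hJind : ∀ a ∈ J, ∀ b ∈ J, ¬ G.Adj a b :=
    fun a ha b hb => hI₀ind a (hJsub ha) b (hJsub hb)
  have hfe := fiber_eq htf v J hJv hJN hJind
  have hfilter_eq : S.filter (fun I => π I = J)
      = insert (insert v J)
        (((G.neighborFinset v).filter (fun u => ∀ w ∈ J, ¬ G.Adj u w)).powerset.image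
          (fun s => J ∪ s)) := hfe
  rw [hfilter_eq]
  set A : Finset V := (G.neighborFinset v).filter (fun u => ∀ w ∈ J, ¬ G.Adj u w) with hA
  have hAN : A ⊆ G.neighborFinset v := Finset.filter_subset _ _
  have hJNdisj : ∀ u ∈ J, u ∉ G.neighborFinset v := by
    intro u hu hmem
    exact hJN u hu ((mem_neighborFinset G v u).1 hmem)
  have hvN : v ∉ G.neighborFinset v := by simp
  -- insert v J is not in the image
  have hnotmem : insert v J ∉ A.powerset.image (fun s => J ∪ s) := by
    intro hmem
    obtain ⟨s, hs, heq⟩ := Finset.mem_image.1 hmem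
    have hv : v ∈ J ∪ s := heq ▸ Finset.mem_insert_self v J
    rcases Finset.mem_union.1 hv with h | h
    · exact hJv h
    · exact hvN (hAN (Finset.mem_powerset.1 hs h))
  -- injectivity of s ↦ J ∪ s on powerset A
  have hinj : Set.InjOn (fun s => J ∪ s) A.powerset := by
    intro s₁ h₁ s₂ h₂ heq
    simp only at heq
    have hdis : ∀ s ⊆ A, ∀ a ∈ s, a ∉ J := by
      intro s hsub a ha haJ
      exact hJNdisj a haJ (hAN (hsub ha))
    apply Finset.ext
    intro a
    constructor
    · intro ha
      have : a ∈ J ∪ s₂ := heq ▸ Finset.mem_union_right J ha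
      rcases Finset.mem_union.1 this with h | h
      · exact absurd h (hdis s₁ (Finset.mem_powerset.1 h₁) a ha)
      · exact h
    · intro ha
      have : a ∈ J ∪ s₁ := heq ▸ Finset.mem_union_right J ha
      rcases Finset.mem_union.1 this with h | h
      · exact absurd h (hdis s₂ (Finset.mem_powerset.1 h₂) a ha)
      · exact h
  have hcard2 : (insert (insert v J) (A.powerset.image (fun s => J ∪ s))).card
      = 1 + 2 ^ A.card := by
    rw [Finset.card_insert_of_notMem hnotmem, Finset.card_image_of_injOn hinj,
      Finset.card_powerset]
    omega
  have hfv1 : f (insert v J) = d := by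
    have hNI : G.neighborFinset v ∩ insert v J = ∅ := by
      apply Finset.eq_empty_of_forall_notMem
      intro x hx
      rw [Finset.mem_inter, Finset.mem_insert] at hx
      rcases hx.2 with rfl | h
      · exact hvN hx.1
      · exact hJNdisj x h hx.1
    rw [hf]
    simp [hNI]
  have hfv2 : ∀ s ∈ A.powerset, f (J ∪ s) = s.card := by
    intro s hs
    have hsA := Finset.mem_powerset.1 hs
    have hvns : v ∉ J ∪ s := by
      rw [Finset.mem_union]
      rintro (h | h)
      · exact hJv h
      · exact hvN (hAN (hsA h))
    have hNI : G.neighborFinset v ∩ (J ∪ s) = s := by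
      apply Finset.ext
      intro x
      rw [Finset.mem_inter, Finset.mem_union]
      constructor
      · rintro ⟨hxN, hx | hx⟩
        · exact absurd hxN (hJNdisj x hx)
        · exact hx
      · intro hx
        exact ⟨hAN (hsA hx), Or.inr hx⟩
    rw [hf]
    simp [hvns, hNI]
  have hsum2 : ∑ I ∈ insert (insert v J) (A.powerset.image (fun s => J ∪ s)), f I
      = d + ∑ s ∈ A.powerset, s.card := by
    rw [Finset.sum_insert hnotmem, Finset.sum_image (fun s hs t ht => hinj hs ht), hfv1]
    congr 1
    exact Finset.sum_congr rfl hfv2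
  rw [hcard2, hsum2]
  have h2T := two_mul_sum_powerset_card A
  have hpow : 2 ^ Nat.log 2 d ≤ d := Nat.pow_log_le_self 2 hd
  have := classIneq d (Nat.log 2 d) A.card hpow
  omega

lemma shearer_count' (htf : G.CliqueFree 3) {d : ℕ} (hd : d ≠ 0)
    (hdeg : ∀ v, G.degree v ≤ d) :
    ∃ I : Finset V, (∀ a ∈ I, ∀ b ∈ I, ¬ G.Adj a b) ∧
      Fintype.card V * Nat.log 2 d ≤ 16 * d * I.card := by
  set S : Finset (Finset V) :=
    univ.filter (fun I : Finset V => ∀ a ∈ I, ∀ b ∈ I, ¬ G.Adj a b) with hSdef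
  have hSne : S.Nonempty := ⟨∅, by simp [hSdef]⟩
  set f : V → Finset V → ℕ :=
    fun v I => d * (if v ∈ I then 1 else 0) + (G.neighborFinset v ∩ I).card with hf
  -- inner bound: for each independent I, ∑ v, f v I ≤ 2 d |I|
  have hinner : ∀ I ∈ S, ∑ v, f v I ≤ 2 * d * I.card := by
    intro I hI
    have h1 : ∑ v, (d * (if v ∈ I then 1 else 0)) = d * I.card := by
      rw [← Finset.mul_sum]
      congr 1
      rw [Finset.sum_ite_mem, Finset.univ_inter, Finset.sum_const, smul_eq_mul, mul_one]
    have h2 : ∑ v, (G.neighborFinset v ∩ I).card ≤ d * I.card := by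
      have hrw : ∀ v : V, (G.neighborFinset v ∩ I).card
          = ∑ u ∈ I, (if G.Adj v u then 1 else 0) := by
        intro v
        rw [← Finset.card_filter]
        congr 1
        apply Finset.ext
        intro u
        simp [Finset.mem_inter, mem_neighborFinset, and_comm]
      calc ∑ v, (G.neighborFinset v ∩ I).card
          = ∑ v, ∑ u ∈ I, (if G.Adj v u then 1 else 0) := Finset.sum_congr rfl (fun v _ => hrw v)
        _ = ∑ u ∈ I, ∑ v, (if G.Adj v u then 1 else 0) := Finset.sum_comm
        _ = ∑ u ∈ I, G.degree u := by
            apply Finset.sum_congr rfl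
            intro u _
            rw [← Finset.card_filter, ← card_neighborFinset_eq_degree]
            congr 1
            apply Finset.ext
            intro v
            simp [mem_neighborFinset, adj_comm]
        _ ≤ ∑ _u ∈ I, d := Finset.sum_le_sum (fun u _ => hdeg u)
        _ = I.card * d := by rw [Finset.sum_const, smul_eq_mul]
        _ = d * I.card := mul_comm _ _
    calc ∑ v, f v I = ∑ v, (d * (if v ∈ I then 1 else 0)) + ∑ v, (G.neighborFinset v ∩ I).card :=
          Finset.sum_add_distrib
      _ ≤ d * I.card + d * I.card := by rw [h1]; exact Nat.add_le_add_left h2 _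
      _ = 2 * d * I.card := by ring
  -- pick max card independent set
  obtain ⟨Im, hImS, hImax⟩ := S.exists_max_image Finset.card hSne
  refine ⟨Im, (Finset.mem_filter.1 hImS).2, ?_⟩
  -- combine
  have hmain : Fintype.card V * Nat.log 2 d * S.card ≤ 16 * d * Im.card * S.card := by
    calc Fintype.card V * Nat.log 2 d * S.card
        = ∑ _v : V, Nat.log 2 d * S.card := by
          rw [Finset.sum_const, Finset.card_univ, smul_eq_mul, mul_assoc]
      _ ≤ ∑ v : V, 8 * ∑ I ∈ S, f v I := Finset.sum_le_sum (fun v _ => step1' htf d hd v)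
      _ = 8 * ∑ I ∈ S, ∑ v, f v I := by rw [← Finset.mul_sum, Finset.sum_comm]
      _ ≤ 8 * ∑ I ∈ S, 2 * d * I.card := by
          apply Nat.mul_le_mul_left
          exact Finset.sum_le_sum hinner
      _ ≤ 8 * ∑ _I ∈ S, 2 * d * Im.card := by
          apply Nat.mul_le_mul_left
          exact Finset.sum_le_sum (fun I hI => Nat.mul_le_mul_left _ (hImax I hI))
      _ = 16 * d * Im.card * S.card := by
          rw [Finset.sum_const, smul_eq_mul]; ring
  exact Nat.le_of_mul_le_mul_right hmain (Finset.card_pos.2 hSne)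

-- Bound 1: neighborhood of any vertex is independent
lemma nbhd_indep' (htf : G.CliqueFree 3) (v : V) :
    ∀ a ∈ G.neighborFinset v, ∀ b ∈ G.neighborFinset v, ¬ G.Adj a b := by
  intro a ha b hb hadj
  rw [mem_neighborFinset] at ha hb
  exact htf {v, a, b} (is3Clique_triple_iff.2 ⟨ha, hb, hadj⟩)

-- Bound 2: greedy
lemma greedy' (d : ℕ) (hdeg : ∀ v, G.degree v ≤ d) (W : Finset V) :
    ∃ I : Finset V, I ⊆ W ∧ (∀ a ∈ I, ∀ b ∈ I, ¬ G.Adj a b) ∧ W.card ≤ I.card * (d + 1) := by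
  induction W using Finset.strongInduction with
  | _ W ih =>
    rcases W.eq_empty_or_nonempty with rfl | ⟨v, hv⟩
    · exact ⟨∅, Finset.Subset.refl _, by simp, by simp⟩
    · set W' := W \ insert v (G.neighborFinset v) with hW'
      have hssub : W' ⊂ W :=
        (Finset.ssubset_iff_of_subset Finset.sdiff_subset).2
          ⟨v, hv, fun h => (Finset.mem_sdiff.1 h).2 (Finset.mem_insert_self v _)⟩
      obtain ⟨I', hI'sub, hI'ind, hI'card⟩ := ih W' hssub
      have hvI' : v ∉ I' := by
        intro h
        have := hI'sub h
        rw [hW', Finset.mem_sdiff] at this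
        exact this.2 (Finset.mem_insert_self v _)
      have hI'N : ∀ u ∈ I', ¬ G.Adj v u := by
        intro u hu hadj
        have := hI'sub hu
        rw [hW', Finset.mem_sdiff] at this
        exact this.2 (Finset.mem_insert_of_mem ((mem_neighborFinset G v u).2 hadj))
      refine ⟨insert v I', ?_, ?_, ?_⟩
      · intro a ha
        rcases Finset.mem_insert.1 ha with rfl | ha
        · exact hv
        · exact (Finset.mem_sdiff.1 (hI'sub ha)).1
      · intro a ha b hb
        simp only [Finset.mem_insert] at ha hb
        rcases ha with rfl | ha
        · rcases hb with rfl | hb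
          · exact fun h => G.irrefl h
          · exact hI'N b hb
        · rcases hb with rfl | hb
          · exact fun h => hI'N a ha (G.adj_symm h)
          · exact hI'ind a ha b hb
      · have hWsub : W ⊆ W' ∪ insert v (G.neighborFinset v) := by
          intro x hx
          rw [Finset.mem_union, hW', Finset.mem_sdiff]
          by_cases h : x ∈ insert v (G.neighborFinset v)
          · exact Or.inr h
          · exact Or.inl ⟨hx, h⟩
        have hNc : (insert v (G.neighborFinset v)).card ≤ d + 1 := by
          rw [Finset.card_insert_of_notMem (by simp)]
          rw [card_neighborFinset_eq_degree]
          exact Nat.add_le_add_right (hdeg v) 1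
        calc W.card ≤ (W' ∪ insert v (G.neighborFinset v)).card := Finset.card_le_card hWsub
          _ ≤ W'.card + (insert v (G.neighborFinset v)).card := Finset.card_union_le _ _
          _ ≤ I'.card * (d+1) + (d+1) := Nat.add_le_add hI'card hNc
          _ = (I'.card + 1) * (d+1) := by ring
          _ = (insert v I').card * (d+1) := by rw [Finset.card_insert_of_notMem hvI']

lemma log_le_half' (t : ℝ) (ht : 0 < t) : Real.log t ≤ t / 2 := by
  have h1 : Real.log (Real.sqrt t) ≤ Real.sqrt t - 1 :=
    Real.log_le_sub_one_of_pos (Real.sqrt_pos.2 ht)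
  have h2 : Real.log (Real.sqrt t) = Real.log t / 2 := Real.log_sqrt ht.le
  have h3 : Real.sqrt t ^ 2 = t := Real.sq_sqrt ht.le
  nlinarith [sq_nonneg (Real.sqrt t - 2)]

-- turn an "all pairs" independence statement into the Pairwise form
lemma indep_to_pairwise {V : Type} {G : SimpleGraph V} {I : Finset V}
    (h : ∀ a ∈ I, ∀ b ∈ I, ¬ G.Adj a b) :
    (↑I : Set V).Pairwise fun a b => ¬ G.Adj a b :=
  fun a ha b hb _ => h a ha b hb

set_option maxHeartbeats 1000000 in
/-- Ramsey-type bound (Kim): there is an absolute constant `c > 0` such that every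
triangle-free graph on `n` vertices contains an independent set of size at least
`c·√(n log n)`. -/
theorem stmt14 :
    ∃ c : ℝ, 0 < c ∧
      ∀ (V : Type) [Fintype V] (G : SimpleGraph V),
        G.CliqueFree 3 →
        ∃ I : Finset V,
          ((↑I : Set V).Pairwise fun a b => ¬ G.Adj a b) ∧
          c * Real.sqrt ((Fintype.card V : ℝ) * Real.log (Fintype.card V)) ≤ I.card := by
  classical
  refine ⟨1/200, by norm_num, ?_⟩
  intro V _ G htf
  set n := Fintype.card V with hn
  set nr : ℝ := (n : ℝ) with hnr
  set x : ℝ := Real.sqrt (nr * Real.log nr) with hx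
  have hxnn : 0 ≤ x := Real.sqrt_nonneg _
  by_cases hn0 : n = 0
  · refine ⟨∅, by simp, ?_⟩
    rw [hx, hnr, hn0]
    simp
  · have hn1 : 1 ≤ n := Nat.one_le_iff_ne_zero.2 hn0
    have hnrpos : (0:ℝ) < nr := by rw [hnr]; exact_mod_cast hn1
    have hnr1 : (1:ℝ) ≤ nr := by rw [hnr]; exact_mod_cast hn1
    haveI hne : Nonempty V := Fintype.card_pos_iff.1 (hn ▸ hn1)
    by_cases hlog : Real.log nr < 8
    · -- small case : use a single vertex
      refine ⟨{Classical.arbitrary V}, by simp, ?_⟩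
      have hlognn : 0 ≤ Real.log nr := Real.log_nonneg hnr1
      have hnrlt : nr < Real.exp 8 := by
        rw [← Real.exp_log hnrpos]
        exact Real.exp_lt_exp.2 hlog
      have hexp : Real.exp 8 ≤ 3000 := by
        have h1 : Real.exp 1 ≤ 2.7182818286 := Real.exp_one_lt_d9.le
        have h8 : Real.exp 8 = Real.exp 1 ^ 8 := by
          rw [← Real.exp_nat_mul]; norm_num
        rw [h8]
        calc Real.exp 1 ^ 8 ≤ 2.7182818286 ^ 8 := by
              apply pow_le_pow_left₀ (Real.exp_nonneg 1) h1
          _ ≤ 3000 := by norm_num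
      have hxle : x ≤ 160 := by
        rw [hx]
        have h1 : nr * Real.log nr ≤ 25600 := by nlinarith
        calc Real.sqrt (nr * Real.log nr) ≤ Real.sqrt 25600 := Real.sqrt_le_sqrt h1
          _ = 160 := by
              rw [show (25600:ℝ) = 160^2 by norm_num, Real.sqrt_sq (by norm_num : (0:ℝ) ≤ 160)]
      rw [Finset.card_singleton]
      push_cast
      linarith
    · -- main case : log nr ≥ 8
      push_neg at hlog
      have hlogpos : (0:ℝ) < Real.log nr := by linarith
      have hx2 : x ^ 2 = nr * Real.log nr := Real.sq_sqrt (by positivity)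
      have hxpos : 0 < x := Real.sqrt_pos.2 (by positivity)
      set d := G.maxDegree with hd
      set D : ℝ := (d : ℝ) with hD
      have hdeg : ∀ v, G.degree v ≤ d := fun v => G.degree_le_maxDegree v
      have hDnn : 0 ≤ D := by positivity
      by_cases hA : x ≤ D
      · -- take the neighborhood of a max degree vertex
        obtain ⟨v, hv⟩ := G.exists_maximal_degree_vertex
        refine ⟨G.neighborFinset v, indep_to_pairwise (nbhd_indep' htf v), ?_⟩
        have hcard : (G.neighborFinset v).card = d := by
          rw [card_neighborFinset_eq_degree, hd, hv]
        rw [hcard]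
        rw [← hD]
        calc 1/200 * x ≤ x := by linarith
          _ ≤ D := hA
      · push_neg at hA
        obtain ⟨I₁, _, hI₁ind, hI₁card⟩ := greedy' d hdeg (univ : Finset V)
        rw [Finset.card_univ, ← hn] at hI₁card
        have hI₁cardR : nr ≤ (I₁.card : ℝ) * (D + 1) := by
          rw [hnr, hD]; exact_mod_cast hI₁card
        by_cases hB1 : (D + 1) * x ≤ 2 * nr
        · refine ⟨I₁, indep_to_pairwise hI₁ind, ?_⟩
          have hc : x / 2 ≤ (I₁.card : ℝ) := by
            have h0 : (0:ℝ) ≤ (I₁.card : ℝ) := Nat.cast_nonneg _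
            nlinarith
          linarith
        · push_neg at hB1
          -- here nr < D * x  (using x ≤ nr)
          have hxlenr : x ≤ nr := by
            rw [hx]
            have h1 : nr * Real.log nr ≤ nr * nr := by
              have := Real.log_le_sub_one_of_pos hnrpos
              nlinarith
            calc Real.sqrt (nr * Real.log nr) ≤ Real.sqrt (nr * nr) := Real.sqrt_le_sqrt h1
              _ = nr := Real.sqrt_mul_self hnrpos.le
          have hnrDx : nr ≤ D * x := by nlinarith
          have hd0 : d ≠ 0 := by
            intro h
            rw [h] at hD
            simp only [Nat.cast_zero] at hD
            rw [hD] at hnrDx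
            nlinarith
          have hDpos : (0:ℝ) < D := by
            rw [hD]
            exact_mod_cast Nat.pos_of_ne_zero hd0
          obtain ⟨I₂, hI₂ind, hI₂card⟩ := shearer_count' htf hd0 hdeg
          refine ⟨I₂, indep_to_pairwise hI₂ind, ?_⟩
          set L := Nat.log 2 d with hL
          have hI₂cardR : nr * (L : ℝ) ≤ 16 * D * (I₂.card : ℝ) := by
            rw [hnr, hD]
            exact_mod_cast hI₂card
          -- lower bound on L
          have hdlt : d < 2 ^ (L + 1) := Nat.lt_pow_succ_log_self (by norm_num) d
          have hDlt : D < 2 ^ (L + 1) := by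
            rw [hD]
            exact_mod_cast hdlt
          have hlogD_ub : Real.log D ≤ ((L:ℝ) + 1) * Real.log 2 := by
            calc Real.log D ≤ Real.log ((2:ℝ) ^ (L + 1)) :=
                  Real.log_le_log hDpos hDlt.le
              _ = ((L:ℝ) + 1) * Real.log 2 := by
                  rw [Real.log_pow]; push_cast; ring
          have hlog2 : Real.log 2 ≤ 1 := by
            have := Real.log_le_sub_one_of_pos (by norm_num : (0:ℝ) < 2)
            linarith
          have hlogD_ub' : Real.log D ≤ (L:ℝ) + 1 := by
            have hLnn : (0:ℝ) ≤ (L:ℝ) + 1 := by positivity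
            calc Real.log D ≤ ((L:ℝ) + 1) * Real.log 2 := hlogD_ub
              _ ≤ ((L:ℝ) + 1) * 1 := by
                  apply mul_le_mul_of_nonneg_left hlog2 hLnn
              _ = (L:ℝ) + 1 := mul_one _
          -- log D ≥ (1/4) log nr
          have hlogx : Real.log x = (Real.log nr + Real.log (Real.log nr)) / 2 := by
            rw [hx, Real.log_sqrt (by positivity), Real.log_mul (ne_of_gt hnrpos) (ne_of_gt hlogpos)]
          have hloglog : Real.log (Real.log nr) ≤ Real.log nr / 2 :=
            log_le_half' _ hlogpos
          have hlogx_ub : Real.log x ≤ 3/4 * Real.log nr := by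
            rw [hlogx]; linarith
          have hlogD_lb : Real.log nr / 4 ≤ Real.log D := by
            have h1 : nr / x ≤ D := by
              rw [div_le_iff₀ hxpos]; linarith [hnrDx]
            have h2 : Real.log (nr / x) ≤ Real.log D :=
              Real.log_le_log (by positivity) h1
            rw [Real.log_div (ne_of_gt hnrpos) (ne_of_gt hxpos)] at h2
            linarith
          have hLlb : Real.log nr / 8 ≤ (L:ℝ) := by
            have : Real.log nr / 4 - 1 ≤ (L:ℝ) := by linarith
            linarith
          -- conclude
          have hI₂nn : (0:ℝ) ≤ (I₂.card : ℝ) := Nat.cast_nonneg _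
          have e2 : nr * (Real.log nr / 8) ≤ nr * (L:ℝ) :=
            mul_le_mul_of_nonneg_left hLlb hnrpos.le
          have e3 : D * (I₂.card : ℝ) ≤ x * (I₂.card : ℝ) :=
            mul_le_mul_of_nonneg_right hA.le hI₂nn
          have hkey : nr * Real.log nr ≤ 128 * (x * (I₂.card : ℝ)) := by
            linarith [hI₂cardR, e2, e3]
          have h2 : x * x ≤ (128 * (I₂.card : ℝ)) * x := by
            have hxx : x * x = nr * Real.log nr := by rw [← hx2]; ring
            linarith [hkey]
          have h3 : x ≤ 128 * (I₂.card : ℝ) := le_of_mul_le_mul_right h2 hxpos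
          linarith
end
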